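/- Let H be a bipartite graph with parts X and Y, and let H' be the bipartite graph with parts X ∪ {v1} and Y ∪ {v2}, where v1, v2 are two new vertices, whose edge set consists of all edges of H together with all edges from v1 to every vertex of Y ∪ {v2} and all edges from v2 to every vertex of X ∪ {v1}. Then for every integer k ≥ 0, H' contains a balanced complete bipartite subgraph of size (k+1) + (k+1) if and only if H contains a balanced complete bipartite subgraph of size k + k. -/

import Mathlib

open Finset

/-- Let `H` be a bipartite graph with parts `X` and `Y`, and let `H'` be the
bipartite graph with parts `X ∪ {v1}` and `Y ∪ {v2}`, where `v1, v2` are two new vertices,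
whose edge set consists of all edges of `H` together with all edges from `v1` to every vertex
of `Y ∪ {v2}` and all edges from `v2` to every vertex of `X ∪ {v1}`. Then for every integer
`k ≥ 0`, `H'` contains a balanced complete bipartite subgraph of size `(k+1) + (k+1)` if and
only if `H` contains a balanced complete bipartite subgraph of size `k + k`. -/
theorem stmt4 {V : Type*} [DecidableEq V]
    (X Y : Finset V) (hXY : Disjoint X Y)
    (v1 v2 : V) (hv1 : v1 ∉ X ∪ Y) (hv2 : v2 ∉ X ∪ Y) (hv12 : v1 ≠ v2)
    (H H' : SimpleGraph V)
    (hbip : ∀ x y : V, H.Adj x y → (x ∈ X ∧ y ∈ Y) ∨ (x ∈ Y ∧ y ∈ X))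
    (hH' : ∀ x y : V, H'.Adj x y ↔ H.Adj x y ∨
      (x = v1 ∧ y ∈ insert v2 Y) ∨ (y = v1 ∧ x ∈ insert v2 Y) ∨
      (x = v2 ∧ y ∈ insert v1 X) ∨ (y = v2 ∧ x ∈ insert v1 X))
    (k : ℕ) :
    (∃ A B : Finset V, A ⊆ insert v1 X ∧ B ⊆ insert v2 Y ∧
      A.card = k + 1 ∧ B.card = k + 1 ∧ ∀ a ∈ A, ∀ b ∈ B, H'.Adj a b) ↔
    (∃ A B : Finset V, A ⊆ X ∧ B ⊆ Y ∧ A.card = k ∧ B.card = k ∧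
      ∀ a ∈ A, ∀ b ∈ B, H.Adj a b) := by
  simp only [Finset.mem_union, not_or] at hv1 hv2
  constructor
  · rintro ⟨A, B, hA, hB, hAc, hBc, hadj⟩
    have hAX : A.erase v1 ⊆ X := fun a ha => by
      have := hA (Finset.mem_of_mem_erase ha)
      rcases Finset.mem_insert.1 this with h | h
      · exact absurd h (Finset.ne_of_mem_erase ha)
      · exact h
    have hBY : B.erase v2 ⊆ Y := fun b hb => by
      have := hB (Finset.mem_of_mem_erase hb)
      rcases Finset.mem_insert.1 this with h | h
      · exact absurd h (Finset.ne_of_mem_erase hb)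
      · exact h
    have hAk : k ≤ (A.erase v1).card := by
      have := Finset.pred_card_le_card_erase (s := A) (a := v1)
      omega
    have hBk : k ≤ (B.erase v2).card := by
      have := Finset.pred_card_le_card_erase (s := B) (a := v2)
      omega
    obtain ⟨A', hA'sub, hA'c⟩ := Finset.exists_subset_card_eq hAk
    obtain ⟨B', hB'sub, hB'c⟩ := Finset.exists_subset_card_eq hBk
    refine ⟨A', B', hA'sub.trans hAX, hB'sub.trans hBY, hA'c, hB'c, ?_⟩
    intro a ha b hb
    have haX : a ∈ X := hAX (hA'sub ha)
    have hbY : b ∈ Y := hBY (hB'sub hb)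
    have hadj' := hadj a (Finset.mem_of_mem_erase (hA'sub ha))
      b (Finset.mem_of_mem_erase (hB'sub hb))
    rcases (hH' a b).1 hadj' with h | ⟨h, _⟩ | ⟨h, _⟩ | ⟨h, _⟩ | ⟨h, _⟩
    · exact h
    · exact absurd (h ▸ haX) hv1.1
    · exact absurd (h ▸ hbY) hv1.2
    · exact absurd (h ▸ haX) hv2.1
    · exact absurd (h ▸ hbY) hv2.2
  · rintro ⟨A, B, hA, hB, hAc, hBc, hadj⟩
    refine ⟨insert v1 A, insert v2 B, Finset.insert_subset_insert _ hA,
      Finset.insert_subset_insert _ hB, ?_, ?_, ?_⟩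
    · rw [Finset.card_insert_of_notMem (fun h => hv1.1 (hA h)), hAc]
    · rw [Finset.card_insert_of_notMem (fun h => hv2.2 (hB h)), hBc]
    · intro a ha b hb
      rw [hH']
      rcases Finset.mem_insert.1 ha with rfl | ha
      · exact Or.inr (Or.inl ⟨rfl, Finset.insert_subset_insert _ hB hb⟩)
      · rcases Finset.mem_insert.1 hb with rfl | hb
        · exact Or.inr (Or.inr (Or.inr (Or.inr
            ⟨rfl, Finset.mem_insert_of_mem (hA ha)⟩)))
        · exact Or.inl (hadj a ha b hb)
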